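/- Let φ_a(z) = (a-z)/(1-az) for a ∈ (0,1) and let η(z) = -(3√3/4)z². Then for f(z) = ∫₀^z β(a-ξ)/(a(1-aξ)³) dξ with β = (3√3/2)a(1-a²), one has (1-|z|²)|f'(z)| = (1-|φ_a(z)|²)|η'(φ_a(z))| for all z ∈ 𝔻, and hence sup_{z∈𝔻}(1-|z|²)|f'(z)| = 1. -/

import Mathlib

theorem statement10 (a : ℝ) (ha : a ∈ Set.Ioo (0 : ℝ) 1)
    (β : ℝ) (hβ : β = 3 * Real.sqrt 3 / 2 * (a * (1 - a ^ 2)))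
    (f : ℂ → ℂ)
    (hf : ∀ z ∈ Metric.ball (0 : ℂ) 1,
      HasDerivAt f ((β : ℂ) * ((a : ℂ) - z) / ((a : ℂ) * (1 - (a : ℂ) * z) ^ 3)) z) :
    (∀ z ∈ Metric.ball (0 : ℂ) 1,
      (1 - ‖z‖ ^ 2) * ‖deriv f z‖ =
        (1 - ‖((a : ℂ) - z) / (1 - (a : ℂ) * z)‖ ^ 2) *
          ‖deriv (fun w : ℂ => -(3 * Real.sqrt 3 / 4) * w ^ 2)
            (((a : ℂ) - z) / (1 - (a : ℂ) * z))‖) ∧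
    IsLUB {y : ℝ | ∃ z ∈ Metric.ball (0 : ℂ) 1,
      y = (1 - ‖z‖ ^ 2) * ‖deriv f z‖} 1 := by
  obtain ⟨ha0, ha1⟩ := ha
  set s := Real.sqrt 3 with hs
  have hs2 : s ^ 2 = 3 := Real.sq_sqrt (by norm_num)
  have hs0 : 0 < s := Real.sqrt_pos.mpr (by norm_num)
  have hs1 : 1 < s := by nlinarith
  have h1a : (0:ℝ) < 1 - a ^ 2 := by nlinarith
  have hβpos : 0 < β := by rw [hβ]; positivity
  -- derivative of η
  have hη : ∀ w : ℂ, ‖deriv (fun w : ℂ => -(3 * Real.sqrt 3 / 4) * w ^ 2) w‖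
      = 3 * s / 2 * ‖w‖ := by
    intro w
    have hd : HasDerivAt (fun w : ℂ => -(3 * (Real.sqrt 3 : ℂ) / 4) * w ^ 2)
        (-(3 * (Real.sqrt 3 : ℂ) / 4) * ((2 : ℕ) * w ^ (2 - 1))) w :=
      (hasDerivAt_pow 2 w).const_mul _
    rw [hd.deriv]
    simp [norm_mul, Complex.norm_real, Real.norm_eq_abs, abs_of_nonneg (Real.sqrt_nonneg 3), ← hs, abs_of_pos hs0]
    ring
  -- key algebraic identity
  have key : ∀ z : ℂ, (‖1 - (a : ℂ) * z‖) ^ 2 - (‖(a : ℂ) - z‖) ^ 2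
      = (1 - a ^ 2) * (1 - ‖z‖ ^ 2) := by
    intro z
    rw [Complex.sq_norm, Complex.sq_norm, Complex.sq_norm]
    simp [Complex.normSq_apply, Complex.mul_re, Complex.mul_im]
    ring
  have hden : ∀ z ∈ Metric.ball (0 : ℂ) 1, (1 : ℂ) - (a : ℂ) * z ≠ 0 := by
    intro z hz
    have hz1 : ‖z‖ < 1 := by simpa [Complex.dist_eq] using hz
    intro h
    have h1 : (1 : ℂ) = (a : ℂ) * z := sub_eq_zero.mp h
    have := congrArg (‖·‖) h1
    rw [norm_one, norm_mul, Complex.norm_real, Real.norm_eq_abs, abs_of_pos ha0] at this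
    nlinarith [norm_nonneg z]
  -- part 1 in a convenient form
  have part1' : ∀ z ∈ Metric.ball (0 : ℂ) 1,
      (1 - ‖z‖ ^ 2) * ‖deriv f z‖ =
      (1 - ‖((a : ℂ) - z) / (1 - (a : ℂ) * z)‖ ^ 2) *
        (3 * s / 2 * ‖((a : ℂ) - z) / (1 - (a : ℂ) * z)‖) := by
    intro z hz
    have hz1 : ‖z‖ < 1 := by simpa [Complex.dist_eq] using hz
    have hB : 0 < ‖1 - (a : ℂ) * z‖ :=
      norm_pos_iff.mpr (hden z hz)
    set A := ‖(a : ℂ) - z‖ with hA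
    set B := ‖1 - (a : ℂ) * z‖ with hBdef
    have hA0 : 0 ≤ A := norm_nonneg _
    have hkey : B ^ 2 - A ^ 2 = (1 - a ^ 2) * (1 - ‖z‖ ^ 2) := key z
    rw [(hf z hz).deriv, norm_div, norm_mul, norm_mul, norm_pow, Complex.norm_real, Real.norm_eq_abs,
      Complex.norm_real, Real.norm_eq_abs, abs_of_pos hβpos, abs_of_pos ha0, norm_div, ← hA, ← hBdef]
    rw [hβ]
    have hBne : B ≠ 0 := ne_of_gt hB
    have h1 : 1 - (A / B) ^ 2 = (1 - a ^ 2) * (1 - ‖z‖ ^ 2) / B ^ 2 := by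
      rw [← hkey]
      field_simp
    rw [h1]
    field_simp
  constructor
  · intro z hz
    rw [part1' z hz, hη]
  · -- sup
    have ub : ∀ y ∈ {y : ℝ | ∃ z ∈ Metric.ball (0 : ℂ) 1,
        y = (1 - ‖z‖ ^ 2) * ‖deriv f z‖}, y ≤ 1 := by
      rintro y ⟨z, hz, rfl⟩
      rw [part1' z hz]
      set t := ‖((a : ℂ) - z) / (1 - (a : ℂ) * z)‖ with ht
      have ht0 : 0 ≤ t := norm_nonneg _
      have hz1 : ‖z‖ < 1 := by simpa [Complex.dist_eq] using hz
      have hB : 0 < ‖1 - (a : ℂ) * z‖ :=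
        norm_pos_iff.mpr (hden z hz)
      have hpos : 0 < (1 - a ^ 2) * (1 - ‖z‖ ^ 2) :=
        mul_pos h1a (by nlinarith [norm_nonneg z])
      have ht1 : t < 1 := by
        rw [ht, norm_div, div_lt_one hB]
        nlinarith [key z, norm_nonneg ((a : ℂ) - z), hB]
      have key2 : 3 * s * t ^ 3 - 3 * s * t + 2 = (s * t - 1) ^ 2 * (s * t + 2) := by
        linear_combination (-(s * t ^ 3)) * hs2
      nlinarith [key2, mul_nonneg (sq_nonneg (s * t - 1)) (by positivity : (0:ℝ) ≤ s * t + 2)]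
    -- membership of 1
    have hsa : (0:ℝ) < s - a := by linarith
    set t₀ : ℝ := (s * a - 1) / (s - a) with ht₀
    have ht₀2 : t₀ ^ 2 < 1 := by
      rw [ht₀, div_pow, div_lt_one (by positivity)]
      nlinarith
    have hz₀ : ((t₀ : ℂ)) ∈ Metric.ball (0 : ℂ) 1 := by
      simp only [Metric.mem_ball, Complex.dist_eq, sub_zero, Complex.norm_real, Real.norm_eq_abs]
      nlinarith [abs_nonneg t₀, sq_abs t₀]
    have hnum : a - t₀ = (1 - a ^ 2) / (s - a) := by
      rw [ht₀]; field_simp; ring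
    have hdenr : 1 - a * t₀ = s * (1 - a ^ 2) / (s - a) := by
      rw [ht₀]; field_simp; ring
    have hreal : (a - t₀) / (1 - a * t₀) = 1 / s := by
      rw [hnum, hdenr]
      rw [div_div_div_eq]
      rw [div_eq_div_iff (by positivity) (ne_of_gt hs0)]
      ring
    have hφ : ((a : ℂ) - (t₀ : ℂ)) / (1 - (a : ℂ) * (t₀ : ℂ)) = ((1/s : ℝ) : ℂ) := by
      rw [← hreal]
      push_cast
      ring
    have hval : (1 - ‖(t₀ : ℂ)‖ ^ 2) * ‖deriv f (t₀ : ℂ)‖ = 1 := by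
      rw [part1' _ hz₀, hφ, Complex.norm_real, Real.norm_eq_abs, abs_of_pos (by positivity : (0:ℝ) < 1/s)]
      have e1 : ((1:ℝ)/s) ^ 2 = 1/3 := by rw [div_pow, one_pow, hs2]
      rw [e1]
      field_simp
      ring
    constructor
    · exact ub
    · intro b hb
      exact hb ⟨(t₀ : ℂ), hz₀, hval.symm⟩
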